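/- Let Z be a real random variable taking finitely many values on a finite probability space, and A0 a random action with P(A0 = a) = π(a|x) > 0. Define h_z(a|x,z) := P(A0 = a | Z = z) for z with P(Z = z) > 0. Then the conditional expectation of Z given A0 = a satisfies E[Z | A0 = a] = E[ Z · h_z(a|x,Z) / π(a|x) ]. -/

import Mathlib

open Finset
open scoped Classical

/-- Return-conditional hindsight Q-function (Statement 3):
`E[Z | A₀ = a] = E[ Z · hz(Z) / πa ]`, where `hz z = P(A₀ = a | Z = z)`
and `πa = P(A₀ = a) > 0`, on a finite probability space. -/
theorem stmt_3 {Ω : Type*} [Fintype Ω] [DecidableEq Ω] (p : Ω → ℝ)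
    (hp : ∀ ω, 0 ≤ p ω) (hsum : ∑ ω, p ω = 1)
    (Z : Ω → ℝ) (EA : Finset Ω) (πa : ℝ)
    (hπ : πa = ∑ ω ∈ EA, p ω) (hπpos : 0 < πa)
    (hz : ℝ → ℝ)
    (hzdef : ∀ z, 0 < ∑ ω ∈ univ.filter (fun ω' => Z ω' = z), p ω →
      hz z = (∑ ω ∈ EA ∩ univ.filter (fun ω' => Z ω' = z), p ω) /
             (∑ ω ∈ univ.filter (fun ω' => Z ω' = z), p ω)) :
    (∑ ω ∈ EA, p ω * Z ω) / πa = ∑ ω, p ω * (Z ω * hz (Z ω) / πa) := by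
  have key : ∑ ω, p ω * (Z ω * hz (Z ω)) = ∑ ω ∈ EA, p ω * Z ω := by
    have h1 : ∑ ω, p ω * (Z ω * hz (Z ω)) =
        ∑ z ∈ univ.image Z, ∑ ω ∈ univ.filter (fun ω' => Z ω' = z),
          p ω * (Z ω * hz (Z ω)) := by
      rw [Finset.sum_fiberwise_of_maps_to (fun ω _ => Finset.mem_image_of_mem Z (mem_univ ω))]
    have h2 : ∑ ω ∈ EA, p ω * Z ω =
        ∑ z ∈ univ.image Z, ∑ ω ∈ EA ∩ univ.filter (fun ω' => Z ω' = z), p ω * Z ω := by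
      have hset : ∀ z : ℝ, EA ∩ univ.filter (fun ω' => Z ω' = z)
          = EA.filter (fun ω' => Z ω' = z) := fun z => by
        ext ω; simp [Finset.mem_filter, Finset.mem_inter]
      calc ∑ ω ∈ EA, p ω * Z ω
          = ∑ z ∈ univ.image Z, ∑ ω ∈ EA.filter (fun ω' => Z ω' = z), p ω * Z ω := by
            rw [Finset.sum_fiberwise_of_maps_to
              (fun ω hω => Finset.mem_image_of_mem Z (mem_univ ω))]
        _ = ∑ z ∈ univ.image Z, ∑ ω ∈ EA ∩ univ.filter (fun ω' => Z ω' = z), p ω * Z ω :=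
            Finset.sum_congr rfl fun z _ => by rw [hset z]
    rw [h1, h2]
    refine Finset.sum_congr rfl fun z hzz => ?_
    set S := ∑ ω ∈ univ.filter (fun ω' => Z ω' = z), p ω with hS
    set T := ∑ ω ∈ EA ∩ univ.filter (fun ω' => Z ω' = z), p ω with hT
    have hfib : ∀ ω ∈ univ.filter (fun ω' => Z ω' = z), Z ω = z := by
      intro ω hω; exact (Finset.mem_filter.mp hω).2
    by_cases hSpos : 0 < S
    · have hzval := hzdef z hSpos
      have lhs : ∑ ω ∈ univ.filter (fun ω' => Z ω' = z), p ω * (Z ω * hz (Z ω))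
          = z * hz z * S := by
        rw [Finset.mul_sum]
        refine Finset.sum_congr rfl fun ω hω => ?_
        rw [hfib ω hω]; ring
      have rhs : ∑ ω ∈ EA ∩ univ.filter (fun ω' => Z ω' = z), p ω * Z ω = z * T := by
        rw [Finset.mul_sum]
        refine Finset.sum_congr rfl fun ω hω => ?_
        rw [hfib ω (Finset.mem_inter.mp hω).2]; ring
      rw [lhs, rhs, hzval]
      field_simp
      have hS0 : (∑ ω ∈ univ.filter (fun ω' => Z ω' = z), p ω) ≠ 0 := hSpos.ne'
      rw [hS, mul_div_assoc, div_self hS0, mul_one]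
    · have hzero : ∀ ω ∈ univ.filter (fun ω' => Z ω' = z), p ω = 0 := by
        intro ω hω
        have hle : p ω ≤ S := Finset.single_le_sum (fun i _ => hp i) hω
        have : S ≤ 0 := le_of_not_gt hSpos
        linarith [hp ω]
      have l0 : ∑ ω ∈ univ.filter (fun ω' => Z ω' = z), p ω * (Z ω * hz (Z ω)) = 0 := by
        refine Finset.sum_eq_zero fun ω hω => by rw [hzero ω hω]; ring
      have r0 : ∑ ω ∈ EA ∩ univ.filter (fun ω' => Z ω' = z), p ω * Z ω = 0 := by
        refine Finset.sum_eq_zero fun ω hω => by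
          rw [hzero ω (Finset.mem_inter.mp hω).2]; ring
      rw [l0, r0]
  have : ∑ ω, p ω * (Z ω * hz (Z ω) / πa) = (∑ ω, p ω * (Z ω * hz (Z ω))) / πa := by
    rw [Finset.sum_div]
    exact Finset.sum_congr rfl fun ω _ => by ring
  rw [this, key]
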